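/- For odd n ≥ 1, (b/a)·j_{n-1}·j_{n+1} − j_n² = −2^{n-1}, where (j_n) is the bi-periodic Jacobsthal sequence. -/
import Mathlib


noncomputable def jj (a b : ℝ) : ℕ → ℝ
  | 0 => 0
  | 1 => 1
  | n + 2 => (if Even (n + 2) then a else b) * jj a b (n + 1) + 2 * jj a b n

lemma jj_key (a b : ℝ) (ha : a ≠ 0) (k : ℕ) :
    (b / a) * jj a b (2 * k) * jj a b (2 * k + 2) - jj a b (2 * k + 1) ^ 2
      = -(2 ^ (2 * k)) := by
  induction k with
  | zero => simp [jj]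
  | succ k ih =>
      have h2 : jj a b (2 * k + 2) = a * jj a b (2 * k + 1) + 2 * jj a b (2 * k) := by
        rw [show 2 * k + 2 = (2 * k) + 2 from rfl, jj]
        simp [Nat.even_add]
      have h3 : jj a b (2 * k + 3) = b * jj a b (2 * k + 2) + 2 * jj a b (2 * k + 1) := by
        rw [show 2 * k + 3 = (2 * k + 1) + 2 from rfl, jj]
        simp [Nat.even_add, parity_simps]
      have h4 : jj a b (2 * k + 4) = a * jj a b (2 * k + 3) + 2 * jj a b (2 * k + 2) := by
        rw [show 2 * k + 4 = (2 * k + 2) + 2 from rfl, jj]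
        simp [Nat.even_add]
      have hk : 2 * (k + 1) = 2 * k + 2 := by ring
      rw [hk, show 2 * k + 2 + 2 = 2 * k + 4 from rfl,
        show 2 * k + 2 + 1 = 2 * k + 3 from rfl, h4, h3, h2]
      rw [h2] at ih
      field_simp at ih ⊢
      ring_nf at ih ⊢
      nlinarith [ih]

theorem stmt18 (a b : ℝ) (ha : a ≠ 0) (hb : b ≠ 0) (n : ℕ) (ho : Odd n) :
    (b / a) * jj a b (n - 1) * jj a b (n + 1) - jj a b n ^ 2 = -(2 ^ (n - 1)) := by
  obtain ⟨k, rfl⟩ := ho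
  have h := jj_key a b ha k
  simpa [Nat.add_sub_cancel] using h
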